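/- Let V_c ∈ (0,d0) satisfy Λ(V_c) = 0 and Λ'(V_c) < 0. Then for every ε > 0 there exist δ* > 0 and t* ≥ t0 such that for every τ0 ≥ t* and every admissible solution v with |v(τ0) − V_c| ≤ δ*, one has |v(t) − V_c| < ε for all t ≥ τ0. Moreover, if n ≤ q, then every such solution satisfies v(t) → V_c as t → ∞. -/

import Mathlib

open Set Filter

lemma barrier_upper {f f' : ℝ → ℝ} {a B : ℝ}
    (hderiv : ∀ t ≥ a, HasDerivAt f (f' t) t)
    (h0 : f a ≤ B) (hneg : ∀ t ≥ a, f t = B → f' t < 0) :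
    ∀ t ≥ a, f t ≤ B := by
  intro t1 ht1
  by_contra hgt
  push_neg at hgt
  have hcont : ContinuousOn f (Icc a t1) := fun x hx =>
    ((hderiv x hx.1).continuousAt).continuousWithinAt
  set K : Set ℝ := Icc a t1 ∩ f ⁻¹' (Iic B) with hK
  have hKclosed : IsClosed K :=
    hcont.preimage_isClosed_of_isClosed isClosed_Icc isClosed_Iic
  have haK : a ∈ K := ⟨⟨le_refl a, ht1⟩, h0⟩
  have hKne : K.Nonempty := ⟨a, haK⟩
  have hKbdd : BddAbove K := ⟨t1, fun x hx => hx.1.2⟩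
  set s := sSup K with hs
  have hsK : s ∈ K := hKclosed.csSup_mem hKne hKbdd
  have hsa : a ≤ s := hsK.1.1
  have hst1 : s ≤ t1 := hsK.1.2
  have hfs_le : f s ≤ B := hsK.2
  have hslt : s < t1 := lt_of_le_of_ne hst1 (fun h => by rw [h] at hfs_le; linarith)
  have hright : ∀ u, s < u → u ≤ t1 → B < f u := by
    intro u hu hut1
    by_contra h
    push_neg at h
    have : u ∈ K := ⟨⟨le_trans hsa hu.le, hut1⟩, h⟩
    exact absurd (le_csSup hKbdd this) (not_le.mpr hu)
  have hfs_ge : B ≤ f s := by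
    have htend : Tendsto f (nhdsWithin s (Ioi s)) (nhds (f s)) :=
      ((hderiv s hsa).continuousAt).continuousWithinAt
    have hev : ∀ᶠ u in nhdsWithin s (Ioi s), B ≤ f u := by
      have hmem : Ioo s t1 ∈ nhdsWithin s (Ioi s) := by
        rw [mem_nhdsWithin_iff_exists_mem_nhds_inter]
        exact ⟨Iio t1, Iio_mem_nhds hslt, fun x hx => ⟨hx.2, hx.1⟩⟩
      filter_upwards [hmem] with u hu
      exact (hright u hu.1 hu.2.le).le
    exact ge_of_tendsto htend hev
  have hfsB : f s = B := le_antisymm hfs_le hfs_ge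
  have hds : f' s < 0 := hneg s hsa hfsB
  have hslope : Tendsto (slope f s) (nhdsWithin s (Ioi s)) (nhds (f' s)) :=
    (hasDerivAt_iff_tendsto_slope.mp (hderiv s hsa)).mono_left
      (nhdsWithin_mono s (fun x hx => ne_of_gt hx : Ioi s ⊆ {s}ᶜ))
  have hev2 : ∀ᶠ u in nhdsWithin s (Ioi s), slope f s u < 0 :=
    hslope.eventually (Filter.Tendsto.eventually_lt_const hds tendsto_id) |>.mono (fun _ h => h)
  have hmem : Ioo s t1 ∈ nhdsWithin s (Ioi s) := by
    rw [mem_nhdsWithin_iff_exists_mem_nhds_inter]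
    exact ⟨Iio t1, Iio_mem_nhds hslt, fun x hx => ⟨hx.2, hx.1⟩⟩
  obtain ⟨u, hu1, hu2⟩ := (hev2.and (eventually_mem_nhdsWithin.mono (fun _ h => h))).and
    (eventually_of_mem hmem (fun _ h => h)) |>.exists
  obtain ⟨hslopeneg, huIoi⟩ := hu1
  have hus : s < u := hu2.1
  have hut1 : u < t1 := hu2.2
  have : f u < f s := by
    have := hslopeneg
    rw [slope_def_field] at this
    have h2 : (f u - f s) / (u - s) < 0 := by
      rw [div_lt_iff₀ (sub_pos.mpr hus)] at this ⊢
      linarith [this]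
    rcases div_neg_iff.mp h2 with ⟨h3, h4⟩ | ⟨h3, h4⟩
    · linarith [sub_pos.mpr hus]
    · linarith
  have := hright u hus hut1.le
  rw [hfsB] at *
  linarith

lemma barrier_lower {f f' : ℝ → ℝ} {a B : ℝ}
    (hderiv : ∀ t ≥ a, HasDerivAt f (f' t) t)
    (h0 : B ≤ f a) (hpos : ∀ t ≥ a, f t = B → 0 < f' t) :
    ∀ t ≥ a, B ≤ f t := by
  intro t ht
  have := barrier_upper (f := fun u => -f u) (f' := fun u => -f' u) (a := a) (B := -B)
    (fun u hu => (hderiv u hu).neg) (by simpa using h0)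
    (fun u hu hfu => by
      have hfu' : f u = B := by
        have : -f u = -B := hfu
        linarith
      simpa using hpos u hu hfu') t ht
  simpa using this

lemma decrease_on {w w' : ℝ → ℝ} {a b : ℝ} (hab : a ≤ b)
    (hd : ∀ t ∈ Set.Icc a b, HasDerivAt w (w' t) t)
    (hw : ∀ t ∈ Set.Icc a b, w' t ≤ 0) : w b ≤ w a := by
  have hanti : AntitoneOn w (Icc a b) := by
    apply antitoneOn_of_deriv_nonpos (convex_Icc a b)
      (fun x hx => (hd x hx).continuousAt.continuousWithinAt)
    · intro x hx
      rw [interior_Icc] at hx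
      exact ((hd x (Ioo_subset_Icc_self hx)).differentiableAt).differentiableWithinAt
    · intro x hx
      rw [interior_Icc] at hx
      rw [(hd x (Ioo_subset_Icc_self hx)).deriv]
      exact hw x (Ioo_subset_Icc_self hx)
  exact hanti ⟨le_refl a, hab⟩ ⟨hab, le_refl b⟩ hab

lemma increase_on {w w' : ℝ → ℝ} {a b : ℝ} (hab : a ≤ b)
    (hd : ∀ t ∈ Set.Icc a b, HasDerivAt w (w' t) t)
    (hw : ∀ t ∈ Set.Icc a b, 0 ≤ w' t) : w a ≤ w b := by
  have := decrease_on (w := fun u => -w u) (w' := fun u => -w' u) hab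
    (fun t ht => (hd t ht).neg) (fun t ht => by simpa using hw t ht)
  simpa using this

lemma mvt_bound {Λ : ℝ → ℝ} {a b k : ℝ} (hab : a < b)
    (hd : ∀ x ∈ Set.Icc a b, HasDerivAt Λ (deriv Λ x) x)
    (hk : ∀ x ∈ Set.Icc a b, deriv Λ x ≤ -k) :
    Λ b - Λ a ≤ -k * (b - a) := by
  obtain ⟨c, hc, hslope⟩ := exists_hasDerivAt_eq_slope Λ (deriv Λ) hab
    (fun x hx => (hd x hx).continuousAt.continuousWithinAt)
    (fun x hx => hd x ⟨hx.1.le, hx.2.le⟩)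
  have hk' := hk c ⟨hc.1.le, hc.2.le⟩
  have hba : (0:ℝ) < b - a := sub_pos.mpr hab
  rw [eq_div_iff hba.ne'] at hslope
  have h7 := mul_le_mul_of_nonneg_right hk' hba.le
  linarith [hslope, h7]

lemma rpow_small {q : ℕ} (hq : 0 < q) {A t : ℝ} (hA : 0 < A) (ht : A ^ q ≤ t) :
    t ^ (-(1:ℝ)/(q:ℝ)) ≤ A⁻¹ := by
  have htpos : 0 < t := lt_of_lt_of_le (pow_pos hA q) ht
  have hq' : (q:ℝ) ≠ 0 := Nat.cast_ne_zero.mpr hq.ne'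
  have h1 : A ≤ t ^ ((1:ℝ)/(q:ℝ)) := by
    have h2 : (A ^ q : ℝ) ^ ((1:ℝ)/(q:ℝ)) ≤ t ^ ((1:ℝ)/(q:ℝ)) :=
      Real.rpow_le_rpow (pow_nonneg hA.le q) ht (by positivity)
    rwa [← Real.rpow_natCast A q, ← Real.rpow_mul hA.le, mul_one_div,
      div_self hq', Real.rpow_one] at h2
  have h3 : t ^ (-(1:ℝ)/(q:ℝ)) = (t ^ ((1:ℝ)/(q:ℝ)))⁻¹ := by
    rw [neg_div, Real.rpow_neg htpos.le]
  rw [h3]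
  exact inv_anti₀ hA h1



/-- An admissible solution of the reduced equation
`v'(t) = t^{−n/q}·Λ(v(t)) + ρ(t)` on `[τ0,∞)` with values in `[0,d0]`, where
`|ρ(t)| ≤ M·t^{−(n+1)/q}`. -/
def IsAdmissibleCycle (q n : ℕ) (d0 M τ0 : ℝ) (Λ : ℝ → ℝ) (v : ℝ → ℝ) : Prop :=
  (∀ t ≥ τ0, v t ∈ Set.Icc (0:ℝ) d0) ∧
  ∃ ρ : ℝ → ℝ,
    (∀ t ≥ τ0, |ρ t| ≤ M * t ^ (-((n:ℝ) + 1)/(q:ℝ))) ∧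
    (∀ t ≥ τ0, HasDerivAt v (t ^ (-(n:ℝ)/(q:ℝ)) * Λ (v t) + ρ t) t)

set_option maxHeartbeats 1000000 in
/-- a zero `V_c ∈ (0,d0)` of `Λ` with `Λ'(V_c) < 0` attracts:
solutions starting near `V_c` at a late enough time stay near `V_c`, and if
`n ≤ q` they converge to `V_c`. -/
theorem stable_limit_cycle
    (q n : ℕ) (hq : 0 < q) (hn : 0 < n)
    (d0 t0 M : ℝ) (hd0 : 0 < d0) (ht0 : 0 < t0) (hM : 0 < M)
    (Λ : ℝ → ℝ) (hΛ : ContDiffOn ℝ 1 Λ (Set.Icc (0:ℝ) d0))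
    (Vc : ℝ) (hVc : Vc ∈ Set.Ioo (0:ℝ) d0) (hΛVc : Λ Vc = 0)
    (hΛ' : deriv Λ Vc < 0) :
    ∀ ε > 0, ∃ δ > 0, ∃ ts ≥ t0, ∀ τ0 ≥ ts,
      ∀ v : ℝ → ℝ, IsAdmissibleCycle q n d0 M τ0 Λ v → |v τ0 - Vc| ≤ δ →
        (∀ t ≥ τ0, |v t - Vc| < ε) ∧
        (n ≤ q → Filter.Tendsto v Filter.atTop (nhds Vc)) := by
  intro ε hε
  have hVc0 : 0 < Vc := hVc.1
  have hVcd : Vc < d0 := hVc.2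
  -- derivative facts
  have hdΛ : DifferentiableOn ℝ Λ (Set.Icc 0 d0) := hΛ.differentiableOn one_ne_zero
  have hHD : ∀ x ∈ Set.Ioo (0:ℝ) d0, HasDerivAt Λ (deriv Λ x) x := by
    intro x hx
    exact ((hdΛ x (Set.Ioo_subset_Icc_self hx)).differentiableAt
      (Icc_mem_nhds hx.1 hx.2)).hasDerivAt
  have hcontD : ContinuousOn (deriv Λ) (Set.Ioo 0 d0) :=
    (hΛ.mono Set.Ioo_subset_Icc_self).continuousOn_deriv_of_isOpen isOpen_Ioo le_rfl
  have hcA : ContinuousAt (deriv Λ) Vc :=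
    hcontD.continuousAt (Ioo_mem_nhds hVc0 hVcd)
  set k : ℝ := -deriv Λ Vc / 2 with hkdef
  have hk : 0 < k := by rw [hkdef]; linarith
  have h2k : deriv Λ Vc < -k := by rw [hkdef]; linarith
  have hev : ∀ᶠ x in nhds Vc, deriv Λ x < -k := hcA (Iio_mem_nhds h2k)
  obtain ⟨r, hr, hball⟩ := Metric.eventually_nhds_iff.mp hev
  set δ1 : ℝ := min (r/2) (min (Vc/2) ((d0 - Vc)/2)) with hδ1def
  have hδ1 : 0 < δ1 := by
    have : 0 < d0 - Vc := sub_pos.mpr hVcd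
    positivity
  have hδ1r : δ1 ≤ r/2 := min_le_left _ _
  have hδ1V : δ1 ≤ Vc/2 := le_trans (min_le_right _ _) (min_le_left _ _)
  have hδ1d : δ1 ≤ (d0 - Vc)/2 := le_trans (min_le_right _ _) (min_le_right _ _)
  have hreg : ∀ x, Vc - δ1 ≤ x → x ≤ Vc + δ1 → (0 < x ∧ x < d0 ∧ deriv Λ x ≤ -k) := by
    intro x h1 h2
    refine ⟨by linarith, by linarith, ?_⟩
    have : dist x Vc < r := by
      rw [Real.dist_eq, abs_lt]
      constructor <;> linarith
    exact (hball this).le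
  have hHD' : ∀ x, Vc - δ1 ≤ x → x ≤ Vc + δ1 → HasDerivAt Λ (deriv Λ x) x := by
    intro x h1 h2
    obtain ⟨hx1, hx2, _⟩ := hreg x h1 h2
    exact hHD x ⟨hx1, hx2⟩
  -- MVT estimates
  have hup : ∀ x, Vc ≤ x → x ≤ Vc + δ1 → Λ x ≤ -k * (x - Vc) := by
    intro x h1 h2
    rcases eq_or_lt_of_le h1 with heq | hlt
    · rw [← heq, hΛVc]; simp
    · have := mvt_bound (a := Vc) (b := x) hlt
        (fun y hy => hHD' y (by linarith [hy.1]) (by linarith [hy.2]))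
        (fun y hy => (hreg y (by linarith [hy.1]) (by linarith [hy.2])).2.2)
      rw [hΛVc] at this
      linarith
  have hlo : ∀ x, Vc - δ1 ≤ x → x ≤ Vc → k * (Vc - x) ≤ Λ x := by
    intro x h1 h2
    rcases eq_or_lt_of_le h2 with heq | hlt
    · rw [heq, hΛVc]; simp
    · have := mvt_bound (a := x) (b := Vc) hlt
        (fun y hy => hHD' y (by linarith [hy.1]) (by linarith [hy.2]))
        (fun y hy => (hreg y (by linarith [hy.1]) (by linarith [hy.2])).2.2)
      rw [hΛVc] at this
      linarith
  -- constants
  set η : ℝ := min δ1 (ε/2) with hηdef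
  have hη : 0 < η := lt_min hδ1 (by linarith)
  have hηδ1 : η ≤ δ1 := min_le_left _ _
  have hηε : η ≤ ε/2 := min_le_right _ _
  set A : ℝ := 2*M/(k*η) with hAdef
  have hA : 0 < A := by positivity
  refine ⟨η/2, by positivity, max t0 (A^q), le_max_left _ _, ?_⟩
  intro τ0 hτ0 v hadm hinit
  obtain ⟨hbox, ρ, hρ, hode⟩ := hadm
  have hτ0t0 : t0 ≤ τ0 := le_trans (le_max_left _ _) hτ0
  have hτ0A : A^q ≤ τ0 := le_trans (le_max_right _ _) hτ0
  have hτ0pos : 0 < τ0 := lt_of_lt_of_le ht0 hτ0t0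
  -- key pointwise sign estimates
  have keyU : ∀ μ : ℝ, 0 < μ → μ ≤ δ1 → ∀ t, (2*M/(k*μ))^q ≤ t → t ≥ τ0 →
      v t = Vc + μ → t ^ (-(n:ℝ)/(q:ℝ)) * Λ (v t) + ρ t < 0 := by
    intro μ hμ hμδ t htA htτ hvt
    have htpos : 0 < t := lt_of_lt_of_le hτ0pos htτ
    have hP : 0 < t ^ (-(n:ℝ)/(q:ℝ)) := Real.rpow_pos_of_pos htpos _
    have hR : 0 < t ^ (-(1:ℝ)/(q:ℝ)) := Real.rpow_pos_of_pos htpos _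
    have hsplit : t ^ (-((n:ℝ)+1)/(q:ℝ)) = t ^ (-(n:ℝ)/(q:ℝ)) * t ^ (-(1:ℝ)/(q:ℝ)) := by
      rw [← Real.rpow_add htpos]
      congr 1
      ring
    have hAμ : 0 < 2*M/(k*μ) := by positivity
    have hsmall := rpow_small hq hAμ htA
    rw [inv_div] at hsmall
    have hsmall' : M * t ^ (-(1:ℝ)/(q:ℝ)) ≤ k*μ/2 := by
      have h4 : M * t ^ (-(1:ℝ)/(q:ℝ)) ≤ M * (k*μ/(2*M)) :=
        mul_le_mul_of_nonneg_left hsmall hM.le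
      have h5 : M * (k*μ/(2*M)) = k*μ/2 := by field_simp
      linarith
    have hΛb : Λ (v t) ≤ -(k * μ) := by
      have := hup (v t) (by rw [hvt]; linarith) (by rw [hvt]; linarith)
      have h6 : v t - Vc = μ := by rw [hvt]; ring
      rw [h6] at this
      linarith [this]
    have hρb := (abs_le.mp (hρ t htτ)).2
    rw [hsplit] at hρb
    have e1 := mul_le_mul_of_nonneg_left hΛb hP.le
    have e2 := mul_le_mul_of_nonneg_left hsmall' hP.le
    have e3 : M * (t ^ (-(n:ℝ)/(q:ℝ)) * t ^ (-(1:ℝ)/(q:ℝ)))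
        = t ^ (-(n:ℝ)/(q:ℝ)) * (M * t ^ (-(1:ℝ)/(q:ℝ))) := by ring
    rw [e3] at hρb
    have e4 : 0 < k * μ * t ^ (-(n:ℝ)/(q:ℝ)) := by positivity
    have e5 : t ^ (-(n:ℝ)/(q:ℝ)) * -(k * μ) = -(k * μ * t ^ (-(n:ℝ)/(q:ℝ))) := by ring
    rw [e5] at e1
    linarith [e1, e2, hρb, e4]
  have keyL : ∀ μ : ℝ, 0 < μ → μ ≤ δ1 → ∀ t, (2*M/(k*μ))^q ≤ t → t ≥ τ0 →
      v t = Vc - μ → 0 < t ^ (-(n:ℝ)/(q:ℝ)) * Λ (v t) + ρ t := by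
    intro μ hμ hμδ t htA htτ hvt
    have htpos : 0 < t := lt_of_lt_of_le hτ0pos htτ
    have hP : 0 < t ^ (-(n:ℝ)/(q:ℝ)) := Real.rpow_pos_of_pos htpos _
    have hR : 0 < t ^ (-(1:ℝ)/(q:ℝ)) := Real.rpow_pos_of_pos htpos _
    have hsplit : t ^ (-((n:ℝ)+1)/(q:ℝ)) = t ^ (-(n:ℝ)/(q:ℝ)) * t ^ (-(1:ℝ)/(q:ℝ)) := by
      rw [← Real.rpow_add htpos]
      congr 1
      ring
    have hAμ : 0 < 2*M/(k*μ) := by positivity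
    have hsmall := rpow_small hq hAμ htA
    rw [inv_div] at hsmall
    have hsmall' : M * t ^ (-(1:ℝ)/(q:ℝ)) ≤ k*μ/2 := by
      have h4 : M * t ^ (-(1:ℝ)/(q:ℝ)) ≤ M * (k*μ/(2*M)) :=
        mul_le_mul_of_nonneg_left hsmall hM.le
      have h5 : M * (k*μ/(2*M)) = k*μ/2 := by field_simp
      linarith
    have hΛb : k * μ ≤ Λ (v t) := by
      have := hlo (v t) (by rw [hvt]; linarith) (by rw [hvt]; linarith)
      have h6 : Vc - v t = μ := by rw [hvt]; ring
      rw [h6] at this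
      linarith [this]
    have hρb := (abs_le.mp (hρ t htτ)).1
    rw [hsplit] at hρb
    have e1 := mul_le_mul_of_nonneg_left hΛb hP.le
    have e2 := mul_le_mul_of_nonneg_left hsmall' hP.le
    have e3 : M * (t ^ (-(n:ℝ)/(q:ℝ)) * t ^ (-(1:ℝ)/(q:ℝ)))
        = t ^ (-(n:ℝ)/(q:ℝ)) * (M * t ^ (-(1:ℝ)/(q:ℝ))) := by ring
    rw [e3] at hρb
    have e4 : 0 < k * μ * t ^ (-(n:ℝ)/(q:ℝ)) := by positivity
    linarith [e1, e2, hρb, e4]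
  -- containment
  have hAqmono : ∀ μ : ℝ, 0 < μ → μ ≤ η → (2*M/(k*μ))^q ≤ (2*M/(k*μ))^q := fun _ _ _ => le_refl _
  have hcontain_up : ∀ t ≥ τ0, v t ≤ Vc + η := by
    apply barrier_upper (f' := fun t => t ^ (-(n:ℝ)/(q:ℝ)) * Λ (v t) + ρ t) hode
    · have := (abs_le.mp hinit).2
      linarith
    · intro t ht hvt
      exact keyU η hη hηδ1 t (le_trans hτ0A ht) ht hvt
  have hcontain_lo : ∀ t ≥ τ0, Vc - η ≤ v t := by
    apply barrier_lower (f' := fun t => t ^ (-(n:ℝ)/(q:ℝ)) * Λ (v t) + ρ t) hode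
    · have := (abs_le.mp hinit).1
      linarith
    · intro t ht hvt
      exact keyL η hη hηδ1 t (le_trans hτ0A ht) ht hvt
  constructor
  · intro t ht
    have h1 := hcontain_up t ht
    have h2 := hcontain_lo t ht
    rw [abs_lt]
    constructor <;> linarith
  -- convergence
  intro hnq
  rw [Metric.tendsto_atTop]
  intro e he
  set μ : ℝ := min (e/2) η with hμdef
  have hμ : 0 < μ := lt_min (by linarith) hη
  have hμη : μ ≤ η := min_le_right _ _
  have hμe : μ ≤ e/2 := min_le_left _ _
  have hμδ1 : μ ≤ δ1 := le_trans hμη hηδ1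
  set c : ℝ := k*μ/2 with hcdef
  have hc : 0 < c := by positivity
  set A' : ℝ := 2*M/(k*μ) with hA'def
  have hA' : 0 < A' := by positivity
  set T' : ℝ := max τ0 (max 1 (A'^q)) with hT'def
  have hT'τ : τ0 ≤ T' := le_max_left _ _
  have hT'1 : (1:ℝ) ≤ T' := le_trans (le_max_left _ _) (le_max_right _ _)
  have hT'A : A'^q ≤ T' := le_trans (le_max_right _ _) (le_max_right _ _)
  have hT'pos : 0 < T' := lt_of_lt_of_le one_pos hT'1
  -- pointwise derivative bound in the stuck region (upper)
  have hPinv : ∀ t : ℝ, 1 ≤ t → t⁻¹ ≤ t ^ (-(n:ℝ)/(q:ℝ)) := by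
    intro t ht1
    have hexp : (-1:ℝ) ≤ -(n:ℝ)/(q:ℝ) := by
      rw [neg_div, neg_le_neg_iff]
      rw [div_le_one (by exact_mod_cast hq)]
      exact_mod_cast hnq
    have := Real.rpow_le_rpow_of_exponent_le ht1 hexp
    rwa [Real.rpow_neg_one] at this
  have hEbound : ∀ t, T' ≤ t → Vc + μ ≤ v t →
      t ^ (-(n:ℝ)/(q:ℝ)) * Λ (v t) + ρ t ≤ -(c * t⁻¹) := by
    intro t ht hvt
    have htτ : τ0 ≤ t := le_trans hT'τ ht
    have htpos : 0 < t := lt_of_lt_of_le hT'pos ht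
    have ht1 : (1:ℝ) ≤ t := le_trans hT'1 ht
    have hP : 0 < t ^ (-(n:ℝ)/(q:ℝ)) := Real.rpow_pos_of_pos htpos _
    have hR : 0 < t ^ (-(1:ℝ)/(q:ℝ)) := Real.rpow_pos_of_pos htpos _
    have hsplit : t ^ (-((n:ℝ)+1)/(q:ℝ)) = t ^ (-(n:ℝ)/(q:ℝ)) * t ^ (-(1:ℝ)/(q:ℝ)) := by
      rw [← Real.rpow_add htpos]; congr 1; ring
    have hsmall := rpow_small hq hA' (le_trans hT'A ht)
    rw [hA'def, inv_div] at hsmall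
    have hsmall' : M * t ^ (-(1:ℝ)/(q:ℝ)) ≤ k*μ/2 := by
      have h4 : M * t ^ (-(1:ℝ)/(q:ℝ)) ≤ M * (k*μ/(2*M)) :=
        mul_le_mul_of_nonneg_left hsmall hM.le
      have h5 : M * (k*μ/(2*M)) = k*μ/2 := by field_simp
      linarith
    have hΛb : Λ (v t) ≤ -(k * μ) := by
      have hvup := hcontain_up t htτ
      have h8 := hup (v t) (by linarith) (by linarith)
      have h9 := mul_le_mul_of_nonneg_left (show μ ≤ v t - Vc by linarith) hk.le
      linarith [h8, h9]
    have hρb := (abs_le.mp (hρ t htτ)).2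
    rw [hsplit] at hρb
    have hcP : c * t⁻¹ ≤ c * t ^ (-(n:ℝ)/(q:ℝ)) :=
      mul_le_mul_of_nonneg_left (hPinv t ht1) hc.le
    have e1 := mul_le_mul_of_nonneg_left hΛb hP.le
    have e2 := mul_le_mul_of_nonneg_left hsmall' hP.le
    have e3 : M * (t ^ (-(n:ℝ)/(q:ℝ)) * t ^ (-(1:ℝ)/(q:ℝ)))
        = t ^ (-(n:ℝ)/(q:ℝ)) * (M * t ^ (-(1:ℝ)/(q:ℝ))) := by ring
    rw [e3] at hρb
    have e5 : t ^ (-(n:ℝ)/(q:ℝ)) * Λ (v t) + ρ t ≤ -(c * t ^ (-(n:ℝ)/(q:ℝ))) := by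
      rw [hcdef]
      have e6 : t ^ (-(n:ℝ)/(q:ℝ)) * -(k * μ) = -(k * μ * t ^ (-(n:ℝ)/(q:ℝ))) := by ring
      rw [e6] at e1
      have e7 : -(k * μ / 2 * t ^ (-(n:ℝ)/(q:ℝ)))
          = -(k * μ * t ^ (-(n:ℝ)/(q:ℝ))) + t ^ (-(n:ℝ)/(q:ℝ)) * (k * μ / 2) := by ring
      rw [e7]
      linarith [e1, e2, hρb]
    linarith [e5, hcP]
  have hEbound' : ∀ t, T' ≤ t → v t ≤ Vc - μ →
      c * t⁻¹ ≤ t ^ (-(n:ℝ)/(q:ℝ)) * Λ (v t) + ρ t := by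
    intro t ht hvt
    have htτ : τ0 ≤ t := le_trans hT'τ ht
    have htpos : 0 < t := lt_of_lt_of_le hT'pos ht
    have ht1 : (1:ℝ) ≤ t := le_trans hT'1 ht
    have hP : 0 < t ^ (-(n:ℝ)/(q:ℝ)) := Real.rpow_pos_of_pos htpos _
    have hR : 0 < t ^ (-(1:ℝ)/(q:ℝ)) := Real.rpow_pos_of_pos htpos _
    have hsplit : t ^ (-((n:ℝ)+1)/(q:ℝ)) = t ^ (-(n:ℝ)/(q:ℝ)) * t ^ (-(1:ℝ)/(q:ℝ)) := by
      rw [← Real.rpow_add htpos]; congr 1; ring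
    have hsmall := rpow_small hq hA' (le_trans hT'A ht)
    rw [hA'def, inv_div] at hsmall
    have hsmall' : M * t ^ (-(1:ℝ)/(q:ℝ)) ≤ k*μ/2 := by
      have h4 : M * t ^ (-(1:ℝ)/(q:ℝ)) ≤ M * (k*μ/(2*M)) :=
        mul_le_mul_of_nonneg_left hsmall hM.le
      have h5 : M * (k*μ/(2*M)) = k*μ/2 := by field_simp
      linarith
    have hΛb : k * μ ≤ Λ (v t) := by
      have hvlo := hcontain_lo t htτ
      have h8 := hlo (v t) (by linarith) (by linarith)
      have h9 := mul_le_mul_of_nonneg_left (show μ ≤ Vc - v t by linarith) hk.le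
      linarith [h8, h9]
    have hρb := (abs_le.mp (hρ t htτ)).1
    rw [hsplit] at hρb
    have hcP : c * t⁻¹ ≤ c * t ^ (-(n:ℝ)/(q:ℝ)) :=
      mul_le_mul_of_nonneg_left (hPinv t ht1) hc.le
    have e1 := mul_le_mul_of_nonneg_left hΛb hP.le
    have e2 := mul_le_mul_of_nonneg_left hsmall' hP.le
    have e3 : M * (t ^ (-(n:ℝ)/(q:ℝ)) * t ^ (-(1:ℝ)/(q:ℝ)))
        = t ^ (-(n:ℝ)/(q:ℝ)) * (M * t ^ (-(1:ℝ)/(q:ℝ))) := by ring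
    rw [e3] at hρb
    have e5 : c * t ^ (-(n:ℝ)/(q:ℝ)) ≤ t ^ (-(n:ℝ)/(q:ℝ)) * Λ (v t) + ρ t := by
      rw [hcdef]
      have e7 : k * μ / 2 * t ^ (-(n:ℝ)/(q:ℝ))
          = t ^ (-(n:ℝ)/(q:ℝ)) * (k * μ) - t ^ (-(n:ℝ)/(q:ℝ)) * (k * μ / 2) := by ring
      rw [e7]
      linarith [e1, e2, hρb]
    linarith [e5, hcP]
  -- existence of entry time from above
  have hdrop_up : ∃ t1 ≥ T', v t1 < Vc + μ := by
    by_contra hcon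
    push_neg at hcon
    have hwd : ∀ b, T' ≤ b → v b + c * Real.log b ≤ v T' + c * Real.log T' := by
      intro b hb
      apply decrease_on (w := fun t => v t + c * Real.log t)
        (w' := fun t => (t ^ (-(n:ℝ)/(q:ℝ)) * Λ (v t) + ρ t) + c * t⁻¹) hb
      · intro t htm
        have htpos : 0 < t := lt_of_lt_of_le hT'pos htm.1
        exact (hode t (le_trans hT'τ htm.1)).add
          ((Real.hasDerivAt_log htpos.ne').const_mul c)
      · intro t htm
        have := hEbound t htm.1 (hcon t htm.1)
        linarith
    obtain ⟨b, hb⟩ := ((Real.tendsto_log_atTop.eventually_gt_atTop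
      ((v T' + c * Real.log T')/c)).and (eventually_ge_atTop T')).exists
    have hb1 := hb.1
    have hb2 := hb.2
    have hbv : 0 ≤ v b := (hbox b (le_trans hT'τ hb2)).1
    have := hwd b hb2
    rw [div_lt_iff₀ hc] at hb1
    linarith
  have hdrop_lo : ∃ t2 ≥ T', Vc - μ < v t2 := by
    by_contra hcon
    push_neg at hcon
    have hwd : ∀ b, T' ≤ b → v T' - c * Real.log T' ≤ v b - c * Real.log b := by
      intro b hb
      apply increase_on (w := fun t => v t - c * Real.log t)
        (w' := fun t => (t ^ (-(n:ℝ)/(q:ℝ)) * Λ (v t) + ρ t) - c * t⁻¹) hb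
      · intro t htm
        have htpos : 0 < t := lt_of_lt_of_le hT'pos htm.1
        exact (hode t (le_trans hT'τ htm.1)).sub
          ((Real.hasDerivAt_log htpos.ne').const_mul c)
      · intro t htm
        have := hEbound' t htm.1 (hcon t htm.1)
        linarith
    obtain ⟨b, hb⟩ := ((Real.tendsto_log_atTop.eventually_gt_atTop
      ((d0 - v T' + c * Real.log T')/c)).and (eventually_ge_atTop T')).exists
    have hb1 := hb.1
    have hb2 := hb.2
    have hbv : v b ≤ d0 := (hbox b (le_trans hT'τ hb2)).2
    have := hwd b hb2
    rw [div_lt_iff₀ hc] at hb1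
    linarith
  obtain ⟨t1, ht1T, ht1v⟩ := hdrop_up
  obtain ⟨t2, ht2T, ht2v⟩ := hdrop_lo
  have hstay_up : ∀ t ≥ t1, v t ≤ Vc + μ := by
    apply barrier_upper (f' := fun t => t ^ (-(n:ℝ)/(q:ℝ)) * Λ (v t) + ρ t)
      (fun t ht => hode t (le_trans hT'τ (le_trans ht1T ht))) ht1v.le
    intro t ht hvt
    exact keyU μ hμ hμδ1 t (le_trans hT'A (le_trans ht1T ht))
      (le_trans hT'τ (le_trans ht1T ht)) hvt
  have hstay_lo : ∀ t ≥ t2, Vc - μ ≤ v t := by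
    apply barrier_lower (f' := fun t => t ^ (-(n:ℝ)/(q:ℝ)) * Λ (v t) + ρ t)
      (fun t ht => hode t (le_trans hT'τ (le_trans ht2T ht))) ht2v.le
    intro t ht hvt
    exact keyL μ hμ hμδ1 t (le_trans hT'A (le_trans ht2T ht))
      (le_trans hT'τ (le_trans ht2T ht)) hvt
  refine ⟨max t1 t2, fun t ht => ?_⟩
  have h1 := hstay_up t (le_trans (le_max_left _ _) ht)
  have h2 := hstay_lo t (le_trans (le_max_right _ _) ht)
  rw [Real.dist_eq, abs_lt]
  constructor <;> linarith
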